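/- Let X be an ε-dense finite subset of S^n (every open ε-ball in S^n contains a point of X), let k ≥ 0, and suppose δ + ε < cov_{S^n}(2k+2). Then for any 2k+2 points x₁,…,x_{2k+2} ∈ X, there exists a point x ∈ X with d(x, x_i) < π - δ for all i = 1,…,2k+2. -/

import Mathlib

open Real
variable {V : Type*} [NormedAddCommGroup V] [InnerProductSpace ℝ V]

lemma arccos_antitone : Antitone Real.arccos := fun _ _ h => by
  unfold Real.arccos; linarith [Real.monotone_arcsin h]

lemma key_ineq (x y z : V) (hx : ‖x‖ = 1) (hy : ‖y‖ = 1) (hz : ‖z‖ = 1) :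
    (inner ℝ x y : ℝ) * inner ℝ y z - Real.sqrt (1 - (inner ℝ x y:ℝ)^2) * Real.sqrt (1 - (inner ℝ y z:ℝ)^2)
      ≤ inner ℝ x z := by
  set t : ℝ := inner ℝ x y with htdef
  set s : ℝ := inner ℝ y z with hsdef
  set u := x - t • y with hu
  set w := z - s • y with hw
  have hsy : (inner ℝ z y : ℝ) = s := (real_inner_comm z y).symm
  have hnu : ‖u‖^2 = 1 - t^2 := by
    rw [hu, norm_sub_sq_real]
    simp [hx, hy, inner_smul_right, norm_smul, ← htdef]
    ring
  have hnw : ‖w‖^2 = 1 - s^2 := by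
    rw [hw, norm_sub_sq_real]
    simp [hz, hy, inner_smul_right, norm_smul, hsy]
    ring
  have huw : (inner ℝ u w : ℝ) = inner ℝ x z - t * s := by
    rw [hu, hw]
    simp [inner_sub_left, inner_sub_right, inner_smul_left, inner_smul_right,
      real_inner_self_eq_norm_sq, hy, hsy, ← htdef, ← hsdef]
  have hC : |(inner ℝ u w : ℝ)| ≤ ‖u‖ * ‖w‖ := abs_real_inner_le_norm u w
  have h1 : ‖u‖ = Real.sqrt (1 - t^2) := by
    rw [← hnu]; exact (Real.sqrt_sq (norm_nonneg u)).symm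
  have h2 : ‖w‖ = Real.sqrt (1 - s^2) := by
    rw [← hnw]; exact (Real.sqrt_sq (norm_nonneg w)).symm
  rw [h1, h2] at hC
  have := neg_abs_le (inner ℝ u w : ℝ)
  linarith [huw]

lemma arccos_triangle (x y z : V) (hx : ‖x‖ = 1) (hy : ‖y‖ = 1) (hz : ‖z‖ = 1) :
    Real.arccos (inner ℝ x z) ≤ Real.arccos (inner ℝ x y) + Real.arccos (inner ℝ y z) := by
  set t : ℝ := inner ℝ x y
  set s : ℝ := inner ℝ y z
  have ht : |t| ≤ 1 := by simpa [hx, hy] using abs_real_inner_le_norm x y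
  have hs : |s| ≤ 1 := by simpa [hy, hz] using abs_real_inner_le_norm y z
  rw [abs_le] at ht hs
  set a := Real.arccos t with ha
  set b := Real.arccos s with hb
  by_cases hab : a + b ≤ Real.pi
  · have hcos : Real.cos (a + b) ≤ inner ℝ x z := by
      rw [Real.cos_add]
      have ca : Real.cos a = t := Real.cos_arccos ht.1 ht.2
      have cb : Real.cos b = s := Real.cos_arccos hs.1 hs.2
      have sa : Real.sin a = Real.sqrt (1 - t^2) := by
        rw [ha, Real.sin_arccos]
      have sb : Real.sin b = Real.sqrt (1 - s^2) := by
        rw [hb, Real.sin_arccos]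
      rw [ca, cb, sa, sb]
      exact key_ineq x y z hx hy hz
    calc Real.arccos (inner ℝ x z) ≤ Real.arccos (Real.cos (a + b)) :=
          arccos_antitone hcos
      _ = a + b := Real.arccos_cos
          (add_nonneg (Real.arccos_nonneg _) (Real.arccos_nonneg _)) hab
  · exact le_trans (Real.arccos_le_pi _) (le_of_not_ge hab)

/-- The unit `n`-sphere as a subtype of `ℝ^{n+1}`. -/
def Sph (n : ℕ) : Type := {v : EuclideanSpace ℝ (Fin (n + 1)) // ‖v‖ = 1}

/-- Geodesic distance on the unit sphere. -/
noncomputable def gdS {n : ℕ} (x y : Sph n) : ℝ :=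
  Real.arccos (inner ℝ x.1 y.1)

/-- The `k`-th covering radius of the sphere with respect to the geodesic metric. -/
noncomputable def covRadiusSph (n k : ℕ) : ℝ :=
  sInf {r : ℝ | 0 ≤ r ∧ ∃ x : Fin k → Sph n, ∀ y : Sph n, ∃ i, gdS y (x i) ≤ r}

/-- Antipode on the sphere. -/
def sphNeg {n : ℕ} (x : Sph n) : Sph n := ⟨-x.1, by rw [norm_neg]; exact x.2⟩

lemma gdS_neg {n : ℕ} (z x : Sph n) : gdS z (sphNeg x) = Real.pi - gdS z x := by
  unfold gdS sphNeg
  rw [inner_neg_right, Real.arccos_neg]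

theorem stmt11 {n : ℕ} (ε δ : ℝ) (hε : 0 < ε) (hδ : 0 < δ) (k : ℕ)
    (X : Finset (Sph n)) (hdense : ∀ y : Sph n, ∃ x ∈ X, gdS y x < ε)
    (hcov : δ + ε < covRadiusSph n (2 * k + 2))
    (x : Fin (2 * k + 2) → Sph n) (hx : ∀ i, x i ∈ X) :
    ∃ z ∈ X, ∀ i, gdS z (x i) < Real.pi - δ := by
  -- the antipodes don't cover within radius δ + ε
  have hy : ∃ y : Sph n, ∀ i, δ + ε < gdS y (sphNeg (x i)) := by
    by_contra h
    push_neg at h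
    have hmem : δ + ε ∈ {r : ℝ | 0 ≤ r ∧ ∃ x : Fin (2*k+2) → Sph n,
        ∀ y : Sph n, ∃ i, gdS y (x i) ≤ r} :=
      ⟨by linarith, fun i => sphNeg (x i), h⟩
    have := csInf_le ⟨0, fun r hr => hr.1⟩ hmem
    exact absurd hcov (not_lt.2 this)
  obtain ⟨y, hy⟩ := hy
  obtain ⟨z, hzX, hzy⟩ := hdense y
  refine ⟨z, hzX, fun i => ?_⟩
  have htri : gdS y (sphNeg (x i)) ≤ gdS y z + gdS z (sphNeg (x i)) :=
    arccos_triangle y.1 z.1 (sphNeg (x i)).1 y.2 z.2 (sphNeg (x i)).2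
  have h1 : δ < gdS z (sphNeg (x i)) := by linarith [hy i]
  rw [gdS_neg] at h1
  linarith
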